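/- Let a < b be real numbers and let f : ℝ → ℝ be monotonically decreasing (antitone) and interval-integrable on [0, b−a]. Define the transfer potential K̄(x) = ∫_a^b f(|x−y|) dy for x ∈ [a,b]. Then K̄ is maximized at the midpoint: for every x ∈ [a,b], K̄(x) ≤ K̄((a+b)/2). -/

import Mathlib

open MeasureTheory

private lemma split_abs (a b x : ℝ) (f : ℝ → ℝ)
    (hint : IntervalIntegrable f volume 0 (b - a)) (hx : x ∈ Set.Icc a b) :
    (∫ y in a..b, f |x - y|) = (∫ t in (0:ℝ)..(x - a), f t) + ∫ t in (0:ℝ)..(b - x), f t := by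
  obtain ⟨hax, hxb⟩ := hx
  have h2 : IntervalIntegrable f volume 0 (b - x) :=
    hint.mono_set (by
      rw [Set.uIcc_of_le (by linarith), Set.uIcc_of_le (by linarith)]
      exact Set.Icc_subset_Icc le_rfl (by linarith))
  have h1' : IntervalIntegrable f volume 0 (x - a) :=
    hint.mono_set (by
      rw [Set.uIcc_of_le (by linarith), Set.uIcc_of_le (by linarith)]
      exact Set.Icc_subset_Icc le_rfl (by linarith))
  have i1 : IntervalIntegrable (fun y => f |x - y|) volume a x := by
    have := (h1'.comp_sub_left x)
    simp only [sub_zero, sub_sub_cancel] at this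
    apply this.symm.congr
    intro y hy
    rw [Set.uIoc_of_le hax] at hy
    simp only [abs_of_nonneg (by linarith [hy.2] : (0:ℝ) ≤ x - y)]
  have i2 : IntervalIntegrable (fun y => f |x - y|) volume x b := by
    have := h2.comp_sub_right x
    simp only [zero_add, sub_add_cancel] at this
    apply this.congr
    intro y hy
    rw [Set.uIoc_of_le hxb] at hy
    simp only [abs_of_nonpos (by linarith [hy.1] : x - y ≤ 0), neg_sub]
  rw [← intervalIntegral.integral_add_adjacent_intervals i1 i2]
  congr 1
  · rw [intervalIntegral.integral_congr (g := fun y => f (x - y))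
      (fun y hy => by rw [Set.uIcc_of_le hax] at hy; rw [abs_of_nonneg (by linarith [hy.2])]),
      intervalIntegral.integral_comp_sub_left, sub_self]
  · have heq : Set.EqOn (fun y => f |x - y|) (fun y => f (y - x)) (Set.uIcc x b) := by
      intro y hy
      rw [Set.uIcc_of_le hxb] at hy
      simp only
      rw [abs_of_nonpos (by linarith [hy.1]), neg_sub]
    rw [intervalIntegral.integral_congr heq, intervalIntegral.integral_comp_sub_right, sub_self]

private lemma key_ineq (f : ℝ → ℝ) (hf : Antitone f) (s t : ℝ) (hs : 0 ≤ s) (hst : s ≤ t)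
    (hint : IntervalIntegrable f volume 0 t) :
    (∫ u in (0:ℝ)..s, f u) + (∫ u in (0:ℝ)..t, f u) ≤ 2 * ∫ u in (0:ℝ)..(s + t)/2, f u := by
  set c := (s + t) / 2 with hc
  have hsc : s ≤ c := by rw [hc]; linarith
  have hct : c ≤ t := by rw [hc]; linarith
  have hsub : ∀ p q : ℝ, 0 ≤ p → p ≤ q → q ≤ t → IntervalIntegrable f volume p q := fun p q hp hpq hq =>
    hint.mono_set (by
      rw [Set.uIcc_of_le hpq, Set.uIcc_of_le (by linarith)]
      exact Set.Icc_subset_Icc hp hq)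
  have h0s := hsub 0 s le_rfl hs (by linarith)
  have h0c := hsub 0 c le_rfl (by linarith) hct
  have hsc' := hsub s c hs hsc (by linarith)
  have hct' := hsub c t (by linarith) hct le_rfl
  have e1 : (∫ u in (0:ℝ)..c, f u) = (∫ u in (0:ℝ)..s, f u) + ∫ u in s..c, f u :=
    (intervalIntegral.integral_add_adjacent_intervals h0s hsc').symm
  have e2 : (∫ u in (0:ℝ)..t, f u) = (∫ u in (0:ℝ)..c, f u) + ∫ u in c..t, f u :=
    (intervalIntegral.integral_add_adjacent_intervals h0c hct').symm
  have key : (∫ u in c..t, f u) ≤ ∫ u in s..c, f u := by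
    have hd : (0:ℝ) ≤ c - s := by linarith
    have e3 : (∫ u in c..t, f u) = ∫ u in s..c, f (u + (c - s)) := by
      rw [intervalIntegral.integral_comp_add_right]
      congr 1 <;> rw [hc] <;> ring
    rw [e3]
    apply intervalIntegral.integral_mono_on hsc _ hsc'
    · intro u _
      exact hf (le_add_of_nonneg_right hd)
    · have := hct'.comp_add_right (c - s)
      have h1 : c - (c - s) = s := by ring
      have h2 : t - (c - s) = c := by rw [hc]; ring
      rwa [h1, h2] at this
  linarith [e1, e2]

/-- **Magnification prototypes (maximum at midpoint).**
For `a < b` and `f` monotonically decreasing (antitone) and interval-integrable on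
`[0, b - a]`, the transfer potential `K̄ x = ∫ y in a..b, f |x - y|` is maximized at the
midpoint: for every `x ∈ [a, b]`, `K̄ x ≤ K̄ ((a + b) / 2)`. -/
theorem transfer_potential_max_at_midpoint
    (a b : ℝ) (hab : a < b) (f : ℝ → ℝ) (hf : Antitone f)
    (hint : IntervalIntegrable f volume 0 (b - a)) :
    ∀ x ∈ Set.Icc a b,
      (∫ y in a..b, f |x - y|) ≤ ∫ y in a..b, f |(a + b) / 2 - y| := by
  intro x hx
  have hm : (a + b) / 2 ∈ Set.Icc a b := ⟨by linarith, by linarith⟩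
  rw [split_abs a b x f hint hx, split_abs a b ((a + b) / 2) f hint hm]
  have hmid : (a + b) / 2 - a = (b - a) / 2 := by ring
  have hmid' : b - (a + b) / 2 = (b - a) / 2 := by ring
  rw [hmid, hmid']
  rcases le_total (x - a) (b - x) with h | h
  · have := key_ineq f hf (x - a) (b - x) (by linarith [hx.1]) h
      (by rw [show b - x = b - a - (x - a) by ring]
          exact hint.mono_set (by
            rw [Set.uIcc_of_le (by linarith [hx.2]), Set.uIcc_of_le (by linarith)]
            exact Set.Icc_subset_Icc le_rfl (by linarith [hx.1])))
    have harg : (x - a + (b - x)) / 2 = (b - a) / 2 := by ring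
    rw [harg] at this
    linarith
  · have := key_ineq f hf (b - x) (x - a) (by linarith [hx.2]) h
      (hint.mono_set (by
        rw [Set.uIcc_of_le (by linarith [hx.1]), Set.uIcc_of_le (by linarith)]
        exact Set.Icc_subset_Icc le_rfl (by linarith [hx.2])))
    have harg : (b - x + (x - a)) / 2 = (b - a) / 2 := by ring
    rw [harg] at this
    linarith
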